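/- arXiv:1408.4590 — 3 statements merged into one kernel-verified Lean document; each statement's English description precedes it below -/
import Mathlib

section
/- For SNR1, SNR2 ≥ 0 and INR1, INR2 > 0 (real numbers), the strict inequality min_{(i,j)∈{(1,2),(2,1)}} [ log(1 + SNRi/(1+INRj)) + log(1 + SNRj + INRj) ] < log(1+INR1) + log(1+INR2) + log(1 + SNR1/(1+INR2)) + log(1 + SNR2/(1+INR1)) holds, where log is to base 2. -/
open Real

/-- Claim H.2 of the paper: for `SNR1, SNR2 ≥ 0` and `INR1, INR2 > 0`,
the perfect-feedback sum-rate bound is strictly less than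
`log(1+INR1) + log(1+INR2) + log(1+SNR1/(1+INR2)) + log(1+SNR2/(1+INR1))`
(logs base 2). -/
theorem gaussian_claim_H2 (SNR1 SNR2 INR1 INR2 : ℝ)
    (hS1 : 0 ≤ SNR1) (hS2 : 0 ≤ SNR2) (hI1 : 0 < INR1) (hI2 : 0 < INR2) :
    min (logb 2 (1 + SNR1 / (1 + INR2)) + logb 2 (1 + SNR2 + INR2))
        (logb 2 (1 + SNR2 / (1 + INR1)) + logb 2 (1 + SNR1 + INR1))
      < logb 2 (1 + INR1) + logb 2 (1 + INR2)
        + logb 2 (1 + SNR1 / (1 + INR2)) + logb 2 (1 + SNR2 / (1 + INR1)) := by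
  have hA : (0:ℝ) < 1 + INR1 := by linarith
  have hB : (0:ℝ) < 1 + INR2 := by linarith
  have hC : (0:ℝ) < 1 + SNR2 / (1 + INR1) := by positivity
  have key : logb 2 (1 + SNR2 + INR2)
      < logb 2 (1 + INR1) + logb 2 (1 + INR2) + logb 2 (1 + SNR2 / (1 + INR1)) := by
    have hprod : (1 + SNR2 + INR2) < (1 + INR1) * (1 + INR2) * (1 + SNR2 / (1 + INR1)) := by
      have h : (1 + INR1) * (1 + SNR2 / (1 + INR1)) = 1 + INR1 + SNR2 := by
        field_simp
      have : (1 + INR1) * (1 + INR2) * (1 + SNR2 / (1 + INR1))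
          = (1 + INR1 + SNR2) * (1 + INR2) := by
        rw [mul_right_comm, h]
      rw [this]; nlinarith
    have hlt : logb 2 (1 + SNR2 + INR2)
        < logb 2 ((1 + INR1) * (1 + INR2) * (1 + SNR2 / (1 + INR1))) :=
      logb_lt_logb (by norm_num) (by linarith) hprod
    calc logb 2 (1 + SNR2 + INR2)
        < logb 2 ((1 + INR1) * (1 + INR2) * (1 + SNR2 / (1 + INR1))) := hlt
      _ = logb 2 (1 + INR1) + logb 2 (1 + INR2) + logb 2 (1 + SNR2 / (1 + INR1)) := by
          rw [logb_mul (by positivity) (by positivity), logb_mul hA.ne' hB.ne']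
  calc min (logb 2 (1 + SNR1 / (1 + INR2)) + logb 2 (1 + SNR2 + INR2))
        (logb 2 (1 + SNR2 / (1 + INR1)) + logb 2 (1 + SNR1 + INR1))
      ≤ logb 2 (1 + SNR1 / (1 + INR2)) + logb 2 (1 + SNR2 + INR2) := min_le_left _ _
    _ < logb 2 (1 + INR1) + logb 2 (1 + INR2)
        + logb 2 (1 + SNR1 / (1 + INR2)) + logb 2 (1 + SNR2 / (1 + INR1)) := by linarith
end

section
/- For nonnegative reals SNR1, INR1, INR2: log(1 + SNR1/(1+INR2)) + log(1 + INR2) − 2·log 3 ≤ log(1+SNR1) + log(1 + INR2/(1+SNR1)) ≤ log(3 + SNR1/(1+INR2)) + log(2 + INR2), where log is base 2. In particular the achievable bound A1+B2 of the paper is within 2·log 3 of the outer bound on R1. -/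
open Real

/-- The achievable bound `A1 + B2` is within `2·log 3` of the outer bound on
`R1`: `log(1+SNR1/(1+INR2)) + log(1+INR2) − 2 log 3
  ≤ log(1+SNR1) + log(1+INR2/(1+SNR1))
  ≤ log(3+SNR1/(1+INR2)) + log(2+INR2)` (logs base 2). -/
theorem gap_A1_B2 (SNR1 INR1 INR2 : ℝ)
    (hS1 : 0 ≤ SNR1) (hI1 : 0 ≤ INR1) (hI2 : 0 ≤ INR2) :
    logb 2 (1 + SNR1 / (1 + INR2)) + logb 2 (1 + INR2) - 2 * logb 2 3
      ≤ logb 2 (1 + SNR1) + logb 2 (1 + INR2 / (1 + SNR1))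
    ∧ logb 2 (1 + SNR1) + logb 2 (1 + INR2 / (1 + SNR1))
      ≤ logb 2 (3 + SNR1 / (1 + INR2)) + logb 2 (2 + INR2) := by
  have ha : (0:ℝ) < 1 + INR2 := by linarith
  have hb : (0:ℝ) < 1 + SNR1 := by linarith
  have h1 : (0:ℝ) < 1 + SNR1 / (1 + INR2) := by positivity
  have h2 : (0:ℝ) < 1 + INR2 / (1 + SNR1) := by positivity
  have e1 : logb 2 (1 + SNR1 / (1 + INR2)) + logb 2 (1 + INR2)
      = logb 2 (1 + SNR1 + INR2) := by
    rw [← Real.logb_mul h1.ne' ha.ne']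
    congr 1
    field_simp
    ring
  have e2 : logb 2 (1 + SNR1) + logb 2 (1 + INR2 / (1 + SNR1))
      = logb 2 (1 + SNR1 + INR2) := by
    rw [← Real.logb_mul hb.ne' h2.ne']
    congr 1
    field_simp
  have e3 : logb 2 (3 + SNR1 / (1 + INR2)) + logb 2 (2 + INR2)
      = logb 2 ((3 + SNR1 / (1 + INR2)) * (2 + INR2)) := by
    rw [← Real.logb_mul (by positivity) (by positivity)]
  constructor
  · rw [e1, e2]
    have : (0:ℝ) ≤ logb 2 3 := Real.logb_nonneg (by norm_num) (by norm_num)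
    linarith
  · rw [e2, e3]
    apply Real.logb_le_logb_of_le (by norm_num) (by positivity)
    have key : (3 + SNR1 / (1 + INR2)) * (2 + INR2) - (1 + SNR1 + INR2)
        = (5 + 2*INR2 + (SNR1*(2+INR2))/(1+INR2) - SNR1) := by
      field_simp; ring
    have : SNR1 ≤ (SNR1*(2+INR2))/(1+INR2) := by
      rw [le_div_iff₀ ha]; nlinarith
    nlinarith [key]
end

section
/- For p ∈ [0,1] and α ≥ 0, define d(α,p) = min(1−α/2, 1−(1−p)·α) for α ≤ 1/2, d(α,p) = min(1−α/2, p+(1−p)·α) for 1/2 ≤ α ≤ 1, and d(α,p) = min(α/2, (1−p)+p·α) for α ≥ 1. Then for every α ≥ 0 with α ≠ 1 and every p ≥ 1/2, d(α,p) equals the perfect-feedback GDoF d(α,1) = max(1−α/2, α/2). -/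
/-- Symmetric generalized degrees of freedom of the symmetric Gaussian IC with
intermittent feedback probability `p` (Corollary 3 of the paper). -/
noncomputable def dGDoF (α p : ℝ) : ℝ :=
  if α ≤ 1 / 2 then min (1 - α / 2) (1 - (1 - p) * α)
  else if α ≤ 1 then min (1 - α / 2) (p + (1 - p) * α)
  else min (α / 2) ((1 - p) + p * α)

/-- For `p ≥ 1/2` (and `p ≤ 1`), the intermittent-feedback GDoF equals the
perfect-feedback GDoF `d(α,1) = max(1 − α/2, α/2)` for every `α ≥ 0`, `α ≠ 1`. -/
theorem gdof_eq_perfect_of_half_le (p : ℝ) (hp : 1 / 2 ≤ p) (hp1 : p ≤ 1)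
    (α : ℝ) (hα : 0 ≤ α) (hα1 : α ≠ 1) :
    dGDoF α p = dGDoF α 1 ∧ dGDoF α 1 = max (1 - α / 2) (α / 2) := by
  unfold dGDoF
  rcases le_or_gt α (1/2) with h1 | h1
  · rw [if_pos h1, if_pos h1]
    rw [min_eq_left (by nlinarith), min_eq_left (by nlinarith),
        max_eq_left (by linarith)]
    exact ⟨rfl, rfl⟩
  · rcases le_or_gt α 1 with h2 | h2
    · have h2' : α < 1 := lt_of_le_of_ne h2 hα1
      have hn : ¬ α ≤ 1/2 := by linarith
      simp only [if_neg hn, if_pos h2]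
      rw [min_eq_left (by nlinarith), min_eq_left (by nlinarith),
          max_eq_left (by linarith)]
      exact ⟨rfl, rfl⟩
    · have hn : ¬ α ≤ 1/2 := by linarith
      have hn2 : ¬ α ≤ 1 := by linarith
      simp only [if_neg hn, if_neg hn2]
      rw [min_eq_left (by nlinarith), min_eq_left (by nlinarith),
          max_eq_right (by linarith)]
      exact ⟨rfl, rfl⟩
end
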